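/- Let Y > 0, α > 0, ρ_max > 0. Let µ : ℝ → ℝ and r : ℝ → ℝ be continuously differentiable, E : ℝ² → ℝ be such that ∂_x E exists, ρ : ℝ² → ℝ, let u : ℝ³ → ℝ be twice continuously differentiable, and let ȳ : ℝ² → (0,Y) be differentiable. Assume: (i) for all (t,x,y) ∈ ℝ × ℝ × (0,Y), ∂_t u + µ(y) ∂_x E(t,x) ∂_x u = α( r(y) − ρ(t,x)/ρ_max ) + (∂_x u)² + (∂_y u)²; (ii) for all (t,x), ∂_y u(t,x,ȳ(t,x)) = 0 and ∂_x u(t,x,ȳ(t,x)) = 0; and (iii) ∂²_yy u(t,x,ȳ(t,x)) < 0 for all (t,x). Then ȳ satisfies the transport equation ∂_t ȳ(t,x) + µ(ȳ(t,x)) ∂_x E(t,x) ∂_x ȳ(t,x) = α r'(ȳ(t,x)) / ( − ∂²_yy u(t,x,ȳ(t,x)) ) for all (t,x). -/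

import Mathlib

set_option maxHeartbeats 1000000 in


/-- transport equation for the dominant phenotype `ȳ(t,x)`. -/
theorem transport_equation_for_fittest_phenotype
    (Y α ρmax : ℝ) (hY : 0 < Y) (hα : 0 < α) (hρmax : 0 < ρmax)
    (μ r : ℝ → ℝ) (hμ : ContDiff ℝ 1 μ) (hr : ContDiff ℝ 1 r)
    (E : ℝ → ℝ → ℝ) (hE : ∀ t x : ℝ, DifferentiableAt ℝ (E t) x)
    (ρ : ℝ → ℝ → ℝ)
    (u : ℝ → ℝ → ℝ → ℝ)
    (hu : ContDiff ℝ 2 (fun p : ℝ × ℝ × ℝ => u p.1 p.2.1 p.2.2))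
    (ybar : ℝ → ℝ → ℝ)
    (hybar : Differentiable ℝ (fun p : ℝ × ℝ => ybar p.1 p.2))
    (hrange : ∀ t x : ℝ, ybar t x ∈ Set.Ioo 0 Y)
    (hHJ : ∀ t x : ℝ, ∀ y ∈ Set.Ioo 0 Y,
      deriv (fun t' => u t' x y) t + μ y * deriv (E t) x * deriv (fun x' => u t x' y) x
        = α * (r y - ρ t x / ρmax)
          + (deriv (fun x' => u t x' y) x) ^ 2 + (deriv (fun y' => u t x y') y) ^ 2)
    (hfocy : ∀ t x : ℝ, deriv (fun y => u t x y) (ybar t x) = 0)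
    (hfocx : ∀ t x : ℝ, deriv (fun x' => u t x' (ybar t x)) x = 0)
    (hconc : ∀ t x : ℝ, deriv (fun y => deriv (fun y' => u t x y') y) (ybar t x) < 0) :
    ∀ t x : ℝ,
      deriv (fun t' => ybar t' x) t
        + μ (ybar t x) * deriv (E t) x * deriv (fun x' => ybar t x') x
      = α * deriv r (ybar t x)
          / (- deriv (fun y => deriv (fun y' => u t x y') y) (ybar t x)) := by
  intro t x
  set f : ℝ × ℝ × ℝ → ℝ := fun p => u p.1 p.2.1 p.2.2 with hfdef
  have hfd : Differentiable ℝ f := hu.differentiable (by norm_num)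
  have hf1 : ContDiff ℝ 1 (fderiv ℝ f) := hu.fderiv_right (by norm_num)
  have hf1d : Differentiable ℝ (fderiv ℝ f) := hf1.differentiable one_ne_zero
  set e1 : ℝ × ℝ × ℝ := (1, 0, 0) with he1
  set e2 : ℝ × ℝ × ℝ := (0, 1, 0) with he2
  set e3 : ℝ × ℝ × ℝ := (0, 0, 1) with he3
  -- first-order directional derivatives along coordinate lines
  have hdT : ∀ a b c : ℝ, HasDerivAt (fun s => u s b c) (fderiv ℝ f (a, b, c) e1) a := by
    intro a b c
    exact (hfd (a, b, c)).hasFDerivAt.comp_hasDerivAt a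
      (HasDerivAt.prodMk (hasDerivAt_id a) (HasDerivAt.prodMk (hasDerivAt_const a b) (hasDerivAt_const a c)))
  have hdX : ∀ a b c : ℝ, HasDerivAt (fun s => u a s c) (fderiv ℝ f (a, b, c) e2) b := by
    intro a b c
    exact (hfd (a, b, c)).hasFDerivAt.comp_hasDerivAt b
      (HasDerivAt.prodMk (hasDerivAt_const b a) (HasDerivAt.prodMk (hasDerivAt_id b) (hasDerivAt_const b c)))
  have hdY : ∀ a b c : ℝ, HasDerivAt (fun s => u a b s) (fderiv ℝ f (a, b, c) e3) c := by
    intro a b c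
    exact (hfd (a, b, c)).hasFDerivAt.comp_hasDerivAt c
      (HasDerivAt.prodMk (hasDerivAt_const c a) (HasDerivAt.prodMk (hasDerivAt_const c b) (hasDerivAt_id c)))
  -- the map q ↦ (fderiv f q) v is differentiable, with derivative the second fderiv
  have hg : ∀ (v : ℝ × ℝ × ℝ) (q : ℝ × ℝ × ℝ),
      HasFDerivAt (fun q' => fderiv ℝ f q' v)
        ((ContinuousLinearMap.apply ℝ ℝ v).comp (fderiv ℝ (fderiv ℝ f) q)) q := by
    intro v q
    exact (ContinuousLinearMap.apply ℝ ℝ v).hasFDerivAt.comp q (hf1d q).hasFDerivAt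
  -- second derivative along a curve
  have hg' : ∀ (v w : ℝ × ℝ × ℝ) (γ : ℝ → ℝ × ℝ × ℝ) (s : ℝ),
      HasDerivAt γ w s →
      HasDerivAt (fun s' => fderiv ℝ f (γ s') v)
        (fderiv ℝ (fderiv ℝ f) (γ s) w v) s := by
    intro v w γ s hγ
    have := (hg v (γ s)).comp_hasDerivAt s hγ
    exact this
  set p : ℝ × ℝ × ℝ := (t, x, ybar t x) with hp
  set Dy : ℝ × ℝ →L[ℝ] ℝ := fderiv ℝ (fun q : ℝ × ℝ => ybar q.1 q.2) (t, x) with hDy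
  set dtt : ℝ := Dy (1, 0) with hdtt
  set dxx : ℝ := Dy (0, 1) with hdxx
  have hyT : HasDerivAt (fun t' => ybar t' x) dtt t := by
    have h := (hybar (t, x)).hasFDerivAt.comp_hasDerivAt t
      (HasDerivAt.prodMk (hasDerivAt_id t) (hasDerivAt_const t x))
    exact h
  have hyX : HasDerivAt (fun x' => ybar t x') dxx x :=
    (hybar (t, x)).hasFDerivAt.comp_hasDerivAt x
      (HasDerivAt.prodMk (hasDerivAt_const x t) (hasDerivAt_id x))
  -- first-order conditions expressed via fderiv
  have focy' : ∀ a b : ℝ, fderiv ℝ f (a, b, ybar a b) e3 = 0 := by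
    intro a b
    rw [← (hdY a b (ybar a b)).deriv]
    exact hfocy a b
  have focx' : fderiv ℝ f p e2 = 0 := by
    rw [← (hdX t x (ybar t x)).deriv]
    exact hfocx t x
  have focyp : fderiv ℝ f p e3 = 0 := focy' t x
  -- differentiate the FOC in t
  have γA : HasDerivAt (fun t' => ((t', x, ybar t' x) : ℝ × ℝ × ℝ)) (1, 0, dtt) t :=
    HasDerivAt.prodMk (hasDerivAt_id t) (HasDerivAt.prodMk (hasDerivAt_const t x) hyT)
  have hA : HasDerivAt (fun t' => fderiv ℝ f (t', x, ybar t' x) e3)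
      (fderiv ℝ (fderiv ℝ f) p (1, 0, dtt) e3) t := hg' e3 (1, 0, dtt) _ t γA
  have E1 : fderiv ℝ (fderiv ℝ f) p (1, 0, dtt) e3 = 0 := by
    have h0 : (fun t' => fderiv ℝ f (t', x, ybar t' x) e3) = fun _ => (0 : ℝ) :=
      funext fun t' => focy' t' x
    rw [h0] at hA
    exact hA.unique (hasDerivAt_const t 0)
  -- differentiate the FOC in x
  have γB : HasDerivAt (fun x' => ((t, x', ybar t x') : ℝ × ℝ × ℝ)) (0, 1, dxx) x :=
    HasDerivAt.prodMk (hasDerivAt_const x t) (HasDerivAt.prodMk (hasDerivAt_id x) hyX)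
  have hB : HasDerivAt (fun x' => fderiv ℝ f (t, x', ybar t x') e3)
      (fderiv ℝ (fderiv ℝ f) p (0, 1, dxx) e3) x := hg' e3 (0, 1, dxx) _ x γB
  have E2 : fderiv ℝ (fderiv ℝ f) p (0, 1, dxx) e3 = 0 := by
    have h0 : (fun x' => fderiv ℝ f (t, x', ybar t x') e3) = fun _ => (0 : ℝ) :=
      funext fun x' => focy' t x'
    rw [h0] at hB
    exact hB.unique (hasDerivAt_const x 0)
  -- curve along y through p
  have γC : HasDerivAt (fun y => ((t, x, y) : ℝ × ℝ × ℝ)) e3 (ybar t x) :=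
    HasDerivAt.prodMk (hasDerivAt_const _ t) (HasDerivAt.prodMk (hasDerivAt_const _ x) (hasDerivAt_id _))
  set cE : ℝ := deriv (E t) x with hcE
  set D2 := fderiv ℝ (fderiv ℝ f) p with hD2
  -- differentiate the HJ equation in y at ybar
  have h1 : HasDerivAt (fun y => fderiv ℝ f (t, x, y) e1) (D2 e3 e1) (ybar t x) :=
    hg' e1 e3 _ _ γC
  have h2 : HasDerivAt (fun y => fderiv ℝ f (t, x, y) e2) (D2 e3 e2) (ybar t x) :=
    hg' e2 e3 _ _ γC
  have h3 : HasDerivAt (fun y => fderiv ℝ f (t, x, y) e3) (D2 e3 e3) (ybar t x) :=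
    hg' e3 e3 _ _ γC
  have hμd : HasDerivAt μ (deriv μ (ybar t x)) (ybar t x) :=
    ((hμ.differentiable one_ne_zero) (ybar t x)).hasDerivAt
  have hrd : HasDerivAt r (deriv r (ybar t x)) (ybar t x) :=
    ((hr.differentiable one_ne_zero) (ybar t x)).hasDerivAt
  have hL : HasDerivAt
      (fun y => fderiv ℝ f (t, x, y) e1 + μ y * cE * fderiv ℝ f (t, x, y) e2)
      (D2 e3 e1 + ((deriv μ (ybar t x) * cE) * fderiv ℝ f p e2
        + (μ (ybar t x) * cE) * D2 e3 e2)) (ybar t x) :=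
    h1.add ((hμd.mul_const cE).mul h2)
  have hR : HasDerivAt
      (fun y => α * (r y - ρ t x / ρmax)
        + (fderiv ℝ f (t, x, y) e2) ^ 2 + (fderiv ℝ f (t, x, y) e3) ^ 2)
      (α * deriv r (ybar t x)
        + (2 : ℕ) * (fderiv ℝ f p e2) ^ 1 * D2 e3 e2
        + (2 : ℕ) * (fderiv ℝ f p e3) ^ 1 * D2 e3 e3) (ybar t x) := by
    exact (((hrd.sub_const (ρ t x / ρmax)).const_mul α).add (h2.pow 2)).add (h3.pow 2)
  have heq : ∀ y ∈ Set.Ioo (0 : ℝ) Y,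
      fderiv ℝ f (t, x, y) e1 + μ y * cE * fderiv ℝ f (t, x, y) e2
        = α * (r y - ρ t x / ρmax)
          + (fderiv ℝ f (t, x, y) e2) ^ 2 + (fderiv ℝ f (t, x, y) e3) ^ 2 := by
    intro y hy
    have h := hHJ t x y hy
    rwa [(hdT t x y).deriv, (hdX t x y).deriv, (hdY t x y).deriv] at h
  have hmem : Set.Ioo (0 : ℝ) Y ∈ nhds (ybar t x) := isOpen_Ioo.mem_nhds (hrange t x)
  have hfeq : (fun y => fderiv ℝ f (t, x, y) e1 + μ y * cE * fderiv ℝ f (t, x, y) e2)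
      =ᶠ[nhds (ybar t x)]
      (fun y => α * (r y - ρ t x / ρmax)
        + (fderiv ℝ f (t, x, y) e2) ^ 2 + (fderiv ℝ f (t, x, y) e3) ^ 2) :=
    Filter.eventuallyEq_of_mem hmem heq
  have hR' : HasDerivAt
      (fun y => fderiv ℝ f (t, x, y) e1 + μ y * cE * fderiv ℝ f (t, x, y) e2)
      (α * deriv r (ybar t x)
        + (2 : ℕ) * (fderiv ℝ f p e2) ^ 1 * D2 e3 e2
        + (2 : ℕ) * (fderiv ℝ f p e3) ^ 1 * D2 e3 e3) (ybar t x) :=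
    hR.congr_of_eventuallyEq hfeq
  have E3 : D2 e3 e1 + ((deriv μ (ybar t x) * cE) * fderiv ℝ f p e2
      + (μ (ybar t x) * cE) * D2 e3 e2)
      = α * deriv r (ybar t x)
        + (2 : ℕ) * (fderiv ℝ f p e2) ^ 1 * D2 e3 e2
        + (2 : ℕ) * (fderiv ℝ f p e3) ^ 1 * D2 e3 e3 := hL.unique hR'
  -- symmetry of the second derivative
  have hsymm : ∀ v w, D2 v w = D2 w v := hu.contDiffAt.isSymmSndFDerivAt (by norm_num)
  -- expand bilinearity in E1 and E2
  have hv1 : ((1 : ℝ), (0 : ℝ), dtt) = e1 + dtt • e3 := by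
    simp [he1, he3, Prod.ext_iff]
  have hv2 : ((0 : ℝ), (1 : ℝ), dxx) = e2 + dxx • e3 := by
    simp [he2, he3, Prod.ext_iff]
  rw [hv1, map_add, map_smul] at E1
  rw [hv2, map_add, map_smul] at E2
  simp only [ContinuousLinearMap.add_apply, ContinuousLinearMap.smul_apply,
    smul_eq_mul] at E1 E2
  -- value of the second y-derivative
  have hA2 : deriv (fun y => deriv (fun y' => u t x y') y) (ybar t x) = D2 e3 e3 := by
    have hinner : (fun y => deriv (fun y' => u t x y') y)
        = fun y => fderiv ℝ f (t, x, y) e3 :=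
      funext fun y => (hdY t x y).deriv
    rw [hinner]
    exact h3.deriv
  have hAneg : D2 e3 e3 < 0 := by rw [← hA2]; exact hconc t x
  -- final algebra
  rw [hyT.deriv, hyX.deriv, hA2]
  have hne : -(D2 e3 e3) ≠ 0 := ne_of_gt (by linarith)
  rw [eq_div_iff hne]
  have hs1 : D2 e1 e3 = D2 e3 e1 := hsymm e1 e3
  have hs2 : D2 e2 e3 = D2 e3 e2 := hsymm e2 e3
  rw [focx', focyp, ← hs1, ← hs2] at E3
  push_cast at E3
  linear_combination E3 - E1 - μ (ybar t x) * cE * E2
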